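/- Let u ∈ ℤ[φ] be nonzero. Then it is not the case that both u and uφ are sums of two squares in ℤ[φ]; that is, there do not simultaneously exist w, x, y, z ∈ ℤ[φ] with u = w² + x² and uφ = y² + z². -/

import Mathlib

open Polynomial

/-- `ℤ[φ] = ℤ[X]/(X² - X - 1)`, the ring of integers of `ℚ(√5)`. -/
noncomputable abbrev Zphi : Type := AdjoinRoot ((X : ℤ[X])^2 - X - 1)

/-- The golden ratio `φ` as an element of `ℤ[φ]`. -/
noncomputable def phi : Zphi := AdjoinRoot.root _

/-- The field norm `N = N_{ℚ(√5)/ℚ}` restricted to `ℤ[φ]`; `N(a + bφ) = a² + ab - b²`. -/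
noncomputable def Nphi : Zphi → ℤ := Algebra.norm ℤ

/-- The associated prime of `u`: the least positive rational prime dividing `N(u)`. -/
noncomputable def assocPrime (u : Zphi) : ℕ := sInf {p : ℕ | p.Prime ∧ (p : ℤ) ∣ Nphi u}

noncomputable def rconj : ℝ := (1 - Real.sqrt 5) / 2

lemma sqrt5_sq : Real.sqrt 5 ^ 2 = 5 := Real.sq_sqrt (by norm_num)

lemma rconj_root : eval₂ (Int.castRingHom ℝ) rconj ((X : ℤ[X])^2 - X - 1) = 0 := by
  simp only [eval₂_sub, eval₂_pow, eval₂_X, eval₂_one, rconj]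
  nlinarith [sqrt5_sq]

noncomputable def sigma2 : Zphi →+* ℝ :=
  AdjoinRoot.lift (Int.castRingHom ℝ) rconj rconj_root

lemma rconj_neg : rconj < 0 := by
  have h := sqrt5_sq
  have h0 := Real.sqrt_nonneg 5
  unfold rconj
  nlinarith

lemma rconj_irr : Irrational rconj := by
  have h : Irrational (Real.sqrt 5) := by
    have h5 : (5 : ℝ) = ((5:ℕ) : ℝ) := by norm_num
    rw [h5]
    exact (by norm_num : Nat.Prime 5).irrational_sqrt
  unfold rconj
  have := (h.intCast_sub 1).div_intCast (by norm_num : (2:ℤ) ≠ 0)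
  convert this using 1
  push_cast
  ring

lemma sigma2_zero (u : Zphi) (h : sigma2 u = 0) : u = 0 := by
  set p : ℤ[X] := (X : ℤ[X])^2 - X - 1 with hp
  have hm : p.Monic := by
    rw [hp]
    monicity!
  obtain ⟨q, rfl⟩ := AdjoinRoot.mk_surjective u
  have hmod : AdjoinRoot.mk p (q %ₘ p) = AdjoinRoot.mk p q := by
    conv_rhs => rw [← modByMonic_add_div q p]
    simp [map_add, map_mul, AdjoinRoot.mk_self]
  have hdeg : (q %ₘ p).degree ≤ 1 := by
    have := degree_modByMonic_lt q hm
    have hpd : p.degree = 2 := by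
      rw [hp]
      compute_degree!
    rw [hpd] at this
    exact Order.le_of_lt_succ (by exact_mod_cast this)
  set a : ℤ := (q %ₘ p).coeff 0
  set b : ℤ := (q %ₘ p).coeff 1
  have hq : q %ₘ p = C b * X + C a := eq_X_add_C_of_degree_le_one hdeg
  have hval : (b : ℝ) * rconj + a = 0 := by
    have : sigma2 (AdjoinRoot.mk p (q %ₘ p)) = 0 := by rw [hmod]; exact h
    rw [hq] at this
    have hr : AdjoinRoot.lift (Int.castRingHom ℝ) rconj rconj_root (AdjoinRoot.root p) = rconj := AdjoinRoot.lift_root _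
    simpa [sigma2, AdjoinRoot.lift_mk, eval₂_add, eval₂_mul, eval₂_C, eval₂_X, hr] using this
  have hb : b = 0 := by
    by_contra hb
    apply Rat.not_irrational (-(a : ℚ) / b)
    have hbne : (b : ℝ) ≠ 0 := Int.cast_ne_zero.mpr hb
    have : rconj = ((-(a : ℚ) / b : ℚ) : ℝ) := by
      push_cast
      field_simp
      linarith [hval]
    rw [← this]
    exact rconj_irr
  have ha : a = 0 := by
    rw [hb] at hval
    push_cast at hval
    simp at hval
    exact_mod_cast hval
  rw [← hmod, hq, ha, hb]
  simp

/-- For nonzero u ∈ ℤ[φ], not both u and uφ are sums of two squares. -/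
theorem stmt6 (u : Zphi) (hu : u ≠ 0) :
    ¬ ((∃ w x : Zphi, u = w ^ 2 + x ^ 2) ∧ (∃ y z : Zphi, u * phi = y ^ 2 + z ^ 2)) := by
  rintro ⟨⟨w, x, hwx⟩, ⟨y, z, hyz⟩⟩
  have h1 : 0 ≤ sigma2 u := by
    rw [hwx]
    simp only [map_add, map_pow]
    positivity
  have hphi : sigma2 phi = rconj := AdjoinRoot.lift_root _
  have h2 : 0 ≤ sigma2 u * rconj := by
    rw [← hphi, ← map_mul, hyz]
    simp only [map_add, map_pow]
    positivity
  have h3 : sigma2 u = 0 := by nlinarith [rconj_neg]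
  exact hu (sigma2_zero u h3)
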